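/- The quotient of the set of 1-formulas of L_□ by the relation of S5[Con]-provable equivalence has exactly 4096 elements. -/

import Mathlib

namespace KripkeModal

/-- Formulas of the modal language `L_□`: atoms `T(x)`, `F(x)` for variables
`x : ℕ`, negation, conjunction, and box. -/
inductive Fml : Type
  | tt : ℕ → Fml   -- T(x)
  | ff : ℕ → Fml   -- F(x)
  | neg : Fml → Fml
  | and : Fml → Fml → Fml
  | box : Fml → Fml
deriving DecidableEq

namespace Fml

/-- Material implication, defined from `¬, ∧`. -/
def imp (φ ψ : Fml) : Fml := neg (and φ (neg ψ))

/-- Disjunction, defined from `¬, ∧`. -/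
def or (φ ψ : Fml) : Fml := neg (and (neg φ) (neg ψ))

/-- Biconditional. -/
def iff (φ ψ : Fml) : Fml := and (imp φ ψ) (imp ψ φ)

/-- Diamond: `◇φ := ¬□¬φ`. -/
def dia (φ : Fml) : Fml := neg (box (neg φ))

/-- `N(x) := ¬T(x) ∧ ¬F(x)`. -/
def Nf (x : ℕ) : Fml := and (neg (tt x)) (neg (ff x))

/-- A fixed contradiction. -/
def bot : Fml := and (tt 0) (neg (tt 0))

end Fml

open Fml

/-- Evaluate a formula propositionally under a valuation `v` of the "atoms":
the atomic formulas `T(x)`, `F(x)` and all boxed formulas are treated as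
propositional atoms. -/
def evalProp (v : Fml → Bool) : Fml → Bool
  | Fml.neg φ => !(evalProp v φ)
  | Fml.and φ ψ => evalProp v φ && evalProp v ψ
  | φ => v φ

/-- A formula is a substitution instance of a classical propositional tautology
iff it evaluates to true under every propositional valuation of its atoms. -/
def Tautology (φ : Fml) : Prop := ∀ v : Fml → Bool, evalProp v φ = true

/-- Provability in the modal system `S5[Ax]`: the smallest set of formulas
containing all substitution instances of propositional tautologies, all
instances of K, T and 5, all formulas in `Ax`, closed under modus ponens and
necessitation.  Taking `Ax = ∅` gives `S5` itself. -/
inductive Prv (Ax : Set Fml) : Fml → Prop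
  | taut {φ} : Tautology φ → Prv Ax φ
  | axK (A B : Fml) : Prv Ax (imp (box (imp A B)) (imp (box A) (box B)))
  | axT (A : Fml) : Prv Ax (imp (box A) A)
  | ax5 (A : Fml) : Prv Ax (imp (dia A) (box (dia A)))
  | axm {φ} : φ ∈ Ax → Prv Ax φ
  | mp {A B} : Prv Ax (imp A B) → Prv Ax A → Prv Ax B
  | nec {A} : Prv Ax A → Prv Ax (box A)

/-- A system is consistent if it does not prove a contradiction. -/
def Consistent (Ax : Set Fml) : Prop := ¬ Prv Ax Fml.bot

/-- The axiom schema `Con`: `¬(T(x) ∧ F(x))`. -/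
def ConAx : Set Fml := { φ | ∃ x : ℕ, φ = neg (and (tt x) (ff x)) }

/-- The axiom schema `Ground`: `(◇T(x) ∧ ◇F(x)) → ◇N(x)`. -/
def GroundAx : Set Fml :=
  { φ | ∃ x : ℕ, φ = imp (and (dia (tt x)) (dia (ff x))) (dia (Nf x)) }

/-- Conjunction of a list of formulas (empty conjunction is `¬⊥`). -/
def bigAnd : List Fml → Fml
  | [] => Fml.neg Fml.bot
  | [φ] => φ
  | φ :: ψ :: rest => Fml.and φ (bigAnd (ψ :: rest))

/-- Disjunction of a list of formulas (the empty disjunction is the fixed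
contradiction `⊥`). -/
def bigOr : List Fml → Fml
  | [] => Fml.bot
  | [φ] => φ
  | φ :: ψ :: rest => Fml.or φ (bigOr (ψ :: rest))

/-- The axiom schema `Min_n`: all instances
`(◇N(x_1) ∧ … ∧ ◇N(x_n)) → ◇(N(x_1) ∧ … ∧ N(x_n))` obtained by substituting
arbitrary (not necessarily distinct) variables for `x_1, …, x_n`. -/
def MinAx (n : ℕ) : Set Fml :=
  { φ | ∃ l : List ℕ, l.length = n ∧
      φ = imp (bigAnd (l.map (fun x => dia (Nf x)))) (dia (bigAnd (l.map Nf))) }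

/-- A formula is extensional if it contains no `□`. -/
def Extensional : Fml → Prop
  | tt _ => True
  | ff _ => True
  | Fml.neg φ => Extensional φ
  | Fml.and φ ψ => Extensional φ ∧ Extensional ψ
  | box _ => False

/-- A formula is intensional if every atomic subformula occurs within the
scope of a `□`. -/
def Intensional : Fml → Prop
  | tt _ => False
  | ff _ => False
  | Fml.neg φ => Intensional φ
  | Fml.and φ ψ => Intensional φ ∧ Intensional ψ
  | box _ => True

/-- The set of variables occurring in a formula. -/
def vars : Fml → Set ℕ
  | tt x => {x}
  | ff x => {x}
  | Fml.neg φ => vars φ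
  | Fml.and φ ψ => vars φ ∪ vars ψ
  | box φ => vars φ

/-- An `n`-formula: one whose atoms use only the variables `x_1, …, x_n`. -/
def IsNFormula (n : ℕ) (φ : Fml) : Prop := vars φ ⊆ {x | 1 ≤ x ∧ x ≤ n}

/-- A 1-formula: one whose atoms use only the single variable `x_1`. -/
abbrev Is1Formula (φ : Fml) : Prop := IsNFormula 1 φ

/-- `φ` is `Γ`-maximal for the system `S5[Ax]`. -/
def GammaMaximal (Ax : Set Fml) (Γ : Set Fml) (φ : Fml) : Prop :=
  Consistent (Ax ∪ {φ}) ∧ φ ∈ Γ ∧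
    ∀ ψ ∈ Γ, Prv Ax (imp φ ψ) ∨ Prv Ax (imp φ (neg ψ))

/-- Extensional `n`-isolators for `S5[Ax]`. -/
def ExtIsolator (n : ℕ) (Ax : Set Fml) (φ : Fml) : Prop :=
  GammaMaximal Ax {ψ | Extensional ψ ∧ IsNFormula n ψ} φ

/-- Intensional `n`-isolators for `S5[Ax]`. -/
def IntIsolator (n : ℕ) (Ax : Set Fml) (φ : Fml) : Prop :=
  GammaMaximal Ax {ψ | Intensional ψ ∧ IsNFormula n ψ} φ

/-- An `n`-isolator for `S5[Ax]`: a consistent conjunction `ε ∧ ι` of an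
extensional `n`-isolator and an intensional `n`-isolator. -/
def Isolator (n : ℕ) (Ax : Set Fml) (φ : Fml) : Prop :=
  ∃ ε ι, ExtIsolator n Ax ε ∧ IntIsolator n Ax ι ∧
    φ = Fml.and ε ι ∧ Consistent (Ax ∪ {φ})

/-- Satisfaction in a model `(W, V)` (with `V = (V1, V2)`) at a world `w`. -/
def Sat {W : Type*} (V1 V2 : ℕ → Set W) : W → Fml → Prop
  | w, tt x => w ∈ V1 x
  | w, ff x => w ∈ V2 x
  | w, Fml.neg φ => ¬ Sat V1 V2 w φ
  | w, Fml.and φ ψ => Sat V1 V2 w φ ∧ Sat V1 V2 w ψ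
  | _, box φ => ∀ v, Sat V1 V2 v φ

/-- The variable assignment satisfies the `Con` constraint. -/
def ConC {W : Type*} (V1 V2 : ℕ → Set W) : Prop := ∀ x, V1 x ∩ V2 x = ∅

/-- The variable assignment satisfies the `Ground` constraint. -/
def GroundC {W : Type*} (V1 V2 : ℕ → Set W) : Prop :=
  ∀ x, (V1 x).Nonempty → (V2 x).Nonempty → ((V1 x ∪ V2 x)ᶜ : Set W).Nonempty

/-- The variable assignment satisfies the `Min` constraint. -/
def MinC {W : Type*} (V1 V2 : ℕ → Set W) : Prop :=
  ∀ l : List ℕ, l ≠ [] → (∀ x ∈ l, ((V1 x ∪ V2 x)ᶜ : Set W).Nonempty) →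
    (⋂ x ∈ l, ((V1 x ∪ V2 x)ᶜ : Set W)).Nonempty

/-- The prime conditions for a subset `S` of the tensor `[3]^n`, realized as
`Fin n → Fin 3` where the value `0` stands for the layer `T`, `1` for `F`,
and `2` for `N` (i.e. `1, 2, 3` in the paper's numbering). -/
def PrimeConditions (n : ℕ) (S : Set (Fin n → Fin 3)) : Prop :=
  S.Nonempty ∧
  (∀ j : Fin n, (S ∩ {a | a j = 0}).Nonempty → (S ∩ {a | a j = 1}).Nonempty →
      (S ∩ {a | a j = 2}).Nonempty) ∧
  ∀ J : Set (Fin n), J.Nonempty →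
    (∀ j ∈ J, (S ∩ {a | a j = 2}).Nonempty) →
    (S ∩ ⋂ j ∈ J, {a | a j = 2}).Nonempty

/-- `χ_1 = T`, `χ_2 = F`, `χ_3 = N` (with `Fin 3` values `0, 1, 2`). -/
def chi (k : Fin 3) (x : ℕ) : Fml :=
  if k = 0 then tt x else if k = 1 then ff x else Nf x

/-- The extensional `n`-isolator `φ_a = χ_{a_1}(x_1) ∧ … ∧ χ_{a_n}(x_n)`
associated with a tuple `a ∈ [3]^n`. -/
def tupleFml {n : ℕ} (a : Fin n → Fin 3) : Fml :=
  bigAnd ((List.finRange n).map (fun i => chi (a i) (i.1 + 1)))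

open Classical in
/-- The pre-`n`-isolator of `S ⊆ [3]^n`:
`⋀_{a ∈ S} ◇φ_a ∧ ⋀_{a ∉ S} ¬◇φ_a`. -/
noncomputable def preIsolator (n : ℕ) (S : Set (Fin n → Fin 3)) : Fml :=
  bigAnd (((Finset.univ : Finset (Fin n → Fin 3)).toList).map
    (fun a => if a ∈ S then dia (tupleFml a) else Fml.neg (dia (tupleFml a))))


namespace NF1

open Fml

/-! ### Tautological consequence machinery -/

lemma tcons {Ax : Set Fml} : ∀ (l : List Fml) (φ : Fml), (∀ γ ∈ l, Prv Ax γ) →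
    (∀ v : Fml → Bool, (∀ γ ∈ l, evalProp v γ = true) → evalProp v φ = true) →
    Prv Ax φ := by
  intro l
  induction l with
  | nil => intro φ _ ht; exact Prv.taut fun v => ht v (by simp)
  | cons γ l ih =>
    intro φ h ht
    have h2 : Prv Ax (imp γ φ) := by
      refine ih (imp γ φ) (fun d hd => h d (List.mem_cons_of_mem _ hd)) ?_
      intro v hv
      simp only [evalProp, imp]
      by_cases hγ : evalProp v γ = true
      · have := ht v (by
          intro d hd
          rcases List.mem_cons.1 hd with rfl | hd
          · exact hγ
          · exact hv d hd)
        simp [this]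
      · simp only [Bool.not_eq_true] at hγ; simp [hγ]
    exact h2.mp (h γ List.mem_cons_self)

lemma taut2 {Ax : Set Fml} (γ₁ γ₂ φ : Fml) (h1 : Prv Ax γ₁) (h2 : Prv Ax γ₂)
    (ht : ∀ v : Fml → Bool, evalProp v γ₁ = true → evalProp v γ₂ = true →
      evalProp v φ = true) : Prv Ax φ := by
  refine tcons [γ₁, γ₂] φ ?_ ?_
  · intro d hd; rcases List.mem_cons.1 hd with rfl|hd
    · exact h1
    · simp at hd; subst hd; exact h2
  · intro v hv; exact ht v (hv _ (by simp)) (hv _ (by simp))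

lemma taut1 {Ax : Set Fml} (γ₁ φ : Fml) (h1 : Prv Ax γ₁)
    (ht : ∀ v : Fml → Bool, evalProp v γ₁ = true → evalProp v φ = true) : Prv Ax φ := by
  refine tcons [γ₁] φ ?_ ?_
  · intro d hd; simp at hd; subst hd; exact h1
  · intro v hv; exact ht v (hv _ (by simp))

lemma taut3 {Ax : Set Fml} (γ₁ γ₂ γ₃ φ : Fml) (h1 : Prv Ax γ₁) (h2 : Prv Ax γ₂)
    (h3 : Prv Ax γ₃)
    (ht : ∀ v : Fml → Bool, evalProp v γ₁ = true → evalProp v γ₂ = true →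
      evalProp v γ₃ = true → evalProp v φ = true) : Prv Ax φ := by
  refine tcons [γ₁, γ₂, γ₃] φ ?_ ?_
  · intro d hd
    simp only [List.mem_cons, List.not_mem_nil, or_false] at hd
    rcases hd with rfl | rfl | rfl
    · exact h1
    · exact h2
    · exact h3
  · intro v hv
    exact ht v (hv γ₁ (by simp)) (hv γ₂ (by simp)) (hv γ₃ (by simp))

lemma taut4 {Ax : Set Fml} (γ₁ γ₂ γ₃ γ₄ φ : Fml) (h1 : Prv Ax γ₁) (h2 : Prv Ax γ₂)
    (h3 : Prv Ax γ₃) (h4 : Prv Ax γ₄)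
    (ht : ∀ v : Fml → Bool, evalProp v γ₁ = true → evalProp v γ₂ = true →
      evalProp v γ₃ = true → evalProp v γ₄ = true → evalProp v φ = true) : Prv Ax φ := by
  refine tcons [γ₁, γ₂, γ₃, γ₄] φ ?_ ?_
  · intro d hd
    simp only [List.mem_cons, List.not_mem_nil, or_false] at hd
    rcases hd with rfl | rfl | rfl | rfl
    · exact h1
    · exact h2
    · exact h3
    · exact h4
  · intro v hv
    exact ht v (hv γ₁ (by simp)) (hv γ₂ (by simp)) (hv γ₃ (by simp)) (hv γ₄ (by simp))

/-! ### Basic modal lemmas -/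

variable {Ax : Set Fml}

lemma boxMono {A B : Fml} (h : Prv Ax (imp A B)) : Prv Ax (imp (box A) (box B)) :=
  (Prv.axK A B).mp h.nec

lemma syl {A B C : Fml} (h1 : Prv Ax (imp A B)) (h2 : Prv Ax (imp B C)) :
    Prv Ax (imp A C) := by
  refine taut2 _ _ _ h1 h2 ?_
  intro v
  simp only [evalProp, imp]
  cases evalProp v A <;> cases evalProp v B <;> cases evalProp v C <;> simp

lemma iffIntro {A B : Fml} (h1 : Prv Ax (imp A B)) (h2 : Prv Ax (imp B A)) :
    Prv Ax (Fml.iff A B) := by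
  refine taut2 _ _ _ h1 h2 ?_
  intro v
  simp only [evalProp, imp, Fml.iff]
  cases evalProp v A <;> cases evalProp v B <;> simp

lemma iff1 {A B : Fml} (h : Prv Ax (Fml.iff A B)) : Prv Ax (imp A B) := by
  refine taut1 _ _ h ?_
  intro v
  simp only [evalProp, imp, Fml.iff]
  cases evalProp v A <;> cases evalProp v B <;> simp

lemma iff2 {A B : Fml} (h : Prv Ax (Fml.iff A B)) : Prv Ax (imp B A) := by
  refine taut1 _ _ h ?_
  intro v
  simp only [evalProp, imp, Fml.iff]
  cases evalProp v A <;> cases evalProp v B <;> simp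

lemma boxCongr {A B : Fml} (h : Prv Ax (Fml.iff A B)) :
    Prv Ax (Fml.iff (box A) (box B)) :=
  iffIntro (boxMono (iff1 h)) (boxMono (iff2 h))

/-- `◇`-monotonicity. -/
lemma diaMono {A B : Fml} (h : Prv Ax (imp A B)) : Prv Ax (imp (dia A) (dia B)) := by
  have h1 : Prv Ax (imp (neg B) (neg A)) := by
    refine taut1 _ _ h ?_
    intro v
    simp only [evalProp, imp]
    cases evalProp v A <;> cases evalProp v B <;> simp
  have h2 := boxMono h1
  refine taut1 _ _ h2 ?_
  intro v
  simp only [evalProp, imp, dia]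
  cases v (box (neg B)) <;> cases v (box (neg A)) <;> simp

/-- `A → ◇A` (dual of T). -/
lemma TDual (A : Fml) : Prv Ax (imp A (dia A)) := by
  refine taut1 _ _ (Prv.axT (neg A)) ?_
  intro v
  simp only [evalProp, imp, dia]
  cases evalProp v A <;> cases v (box (neg A)) <;> simp

/-- The 4 axiom: `□B → □□B`, derivable in S5. -/
lemma box4 (B : Fml) : Prv Ax (imp (box B) (box (box B))) := by
  -- step 1 : □B → ◇□B
  have s1 : Prv Ax (imp (box B) (dia (box B))) := TDual (box B)
  -- step 3 : ◇□B → □B.  From 5 on ¬B : ◇¬B → □◇¬B.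
  have five : Prv Ax (imp (dia (neg B)) (box (dia (neg B)))) := Prv.ax5 (neg B)
  -- ◇¬B = ¬□¬¬B ; clean ¬¬B to B inside box.
  have dnn : Prv Ax (Fml.iff (neg (neg B)) B) := by
    refine tcons [] _ (by simp) ?_
    intro v _
    simp only [evalProp, imp, Fml.iff]
    cases evalProp v B <;> simp
  have c1 : Prv Ax (Fml.iff (box (neg (neg B))) (box B)) := boxCongr dnn
  -- from c1 : ◇¬B ↔ ¬□B
  have c2 : Prv Ax (Fml.iff (dia (neg B)) (neg (box B))) := by
    refine taut1 _ _ c1 ?_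
    intro v
    simp only [evalProp, imp, Fml.iff, dia]
    cases v (box (neg (neg B))) <;> cases v (box B) <;> simp
  have c3 : Prv Ax (Fml.iff (box (dia (neg B))) (box (neg (box B)))) := boxCongr c2
  have s3' : Prv Ax (imp (neg (box B)) (box (neg (box B)))) := by
    refine taut3 _ _ _ _ c2 c3 five ?_
    intro v
    simp only [evalProp, imp, Fml.iff, dia]
    cases v (box (neg (neg B))) <;> cases v (box B) <;>
      cases v (box (dia (neg B))) <;> cases v (box (neg (box B))) <;> simp
  -- step 3 : ◇□B → □B  (contrapositive of s3')
  have s3 : Prv Ax (imp (dia (box B)) (box B)) := by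
    refine taut1 _ _ s3' ?_
    intro v
    simp only [evalProp, imp, dia]
    cases v (box B) <;> cases v (box (neg (box B))) <;> simp
  -- step 2 : ◇□B → □◇□B
  have s2 : Prv Ax (imp (dia (box B)) (box (dia (box B)))) := Prv.ax5 (box B)
  -- combine : □B → ◇□B → □◇□B → □□B
  exact syl s1 (syl s2 (boxMono s3))

end NF1

namespace NF1
open Fml
variable {Ax : Set Fml}

/-- Pure propositional theorem helper. -/
lemma taut0 (φ : Fml)
    (ht : ∀ v : Fml → Bool, evalProp v φ = true) : Prv Ax φ := Prv.taut ht

/-- `¬◇A → □¬◇A` (stability of negated diamonds), derivable in S5. -/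
lemma stabNegDia (A : Fml) : Prv Ax (imp (neg (dia A)) (box (neg (dia A)))) := by
  have t1 : Prv Ax (imp (neg (dia A)) (box (neg A))) := by
    refine taut0 _ ?_
    intro v
    simp only [evalProp, imp, dia]
    cases v (box (neg A)) <;> simp
  have t2 : Prv Ax (imp (box (neg A)) (neg (dia A))) := by
    refine taut0 _ ?_
    intro v
    simp only [evalProp, imp, dia]
    cases v (box (neg A)) <;> simp
  exact syl t1 (syl (box4 (neg A)) (boxMono t2))

/-- `□A ∧ □B → □(A ∧ B)`. -/
lemma boxAnd2 (A B : Fml) : Prv Ax (imp (Fml.and (box A) (box B)) (box (Fml.and A B))) := by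
  have h : Prv Ax (imp A (imp B (Fml.and A B))) := by
    refine taut0 _ ?_
    intro v
    simp only [evalProp, imp]
    cases evalProp v A <;> cases evalProp v B <;> simp
  have k1 : Prv Ax (imp (box A) (box (imp B (Fml.and A B)))) := boxMono h
  have k2 := Prv.axK (Ax := Ax) B (Fml.and A B)
  refine taut2 _ _ _ k1 k2 ?_
  intro v
  simp only [evalProp, imp]
  cases v (box A) <;> cases v (box B) <;>
    cases v (box (imp B (Fml.and A B))) <;> cases v (box (Fml.and A B)) <;> simp

/-- `◇A ∧ □B → ◇(A ∧ B)`. -/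
lemma diaBoxAnd (A B : Fml) :
    Prv Ax (imp (Fml.and (dia A) (box B)) (dia (Fml.and A B))) := by
  have h : Prv Ax (imp B (imp (neg (Fml.and A B)) (neg A))) := by
    refine taut0 _ ?_
    intro v
    simp only [evalProp, imp]
    cases evalProp v A <;> cases evalProp v B <;> simp
  have k1 : Prv Ax (imp (box B) (box (imp (neg (Fml.and A B)) (neg A)))) := boxMono h
  have k2 := Prv.axK (Ax := Ax) (neg (Fml.and A B)) (neg A)
  refine taut2 _ _ _ k1 k2 ?_
  intro v
  simp only [evalProp, imp, dia]
  cases v (box B) <;> cases v (box (neg A)) <;>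
    cases v (box (neg (Fml.and A B))) <;>
    cases v (box (imp (neg (Fml.and A B)) (neg A))) <;> simp

/-- `◇¬A → ¬□A`. -/
lemma diaNegToNegBox (A : Fml) : Prv Ax (imp (dia (neg A)) (neg (box A))) := by
  have h : Prv Ax (imp (box A) (box (neg (neg A)))) := by
    refine boxMono (taut0 _ ?_)
    intro v
    simp only [evalProp, imp]
    cases evalProp v A <;> simp
  refine taut1 _ _ h ?_
  intro v
  simp only [evalProp, imp, dia]
  cases v (box A) <;> cases v (box (neg (neg A))) <;> simp

end NF1

namespace NF1
open Fml

/-! ### Semantics on the 12-point type -/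

/-- Truth value of a formula at state `s` with profile `S` (one variable `x₁`;
`s = 0/1/2` means `T/F/N`; `S` records which states are realized). -/
def tv : Fml → Fin 3 → (Fin 3 → Bool) → Bool
  | Fml.tt x, s, _ => decide (x = 1) && decide (s = 0)
  | Fml.ff x, s, _ => decide (x = 1) && decide (s = 1)
  | Fml.neg φ, s, S => !tv φ s S
  | Fml.and φ ψ, s, S => tv φ s S && tv ψ s S
  | Fml.box φ, _, S => decide (∀ t, S t = true → tv φ t S = true)

lemma evalProp_tv (s : Fin 3) (S : Fin 3 → Bool) :
    ∀ A, evalProp (fun ψ => tv ψ s S) A = tv A s S := by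
  intro A
  induction A with
  | tt x => rfl
  | ff x => rfl
  | neg φ ih => simp [evalProp, tv, ih]
  | and φ ψ ih1 ih2 => simp [evalProp, tv, ih1, ih2]
  | box φ => rfl

lemma tv_imp (A B : Fml) (s S) : tv (imp A B) s S = (!(tv A s S) || tv B s S) := by
  simp [imp, tv]

lemma tv_box (A : Fml) (s S) : tv (box A) s S = decide (∀ t, S t = true → tv A t S = true) := rfl

lemma tv_dia (A : Fml) (s S) : tv (dia A) s S = !decide (∀ t, S t = true → tv A t S = false) := by
  simp [dia, tv]

/-- Soundness of `S5[Con]` for the 12-point semantics. -/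
lemma sound {A : Fml} (h : Prv ConAx A) :
    ∀ (s : Fin 3) (S : Fin 3 → Bool), S s = true → tv A s S = true := by
  induction h with
  | taut ht =>
      intro s S _
      have := ht (fun ψ => tv ψ s S)
      rwa [evalProp_tv] at this
  | axK A B =>
      intro s S _
      simp only [tv_imp, tv_box, Bool.or_eq_true, Bool.not_eq_true', decide_eq_false_iff_not,
        decide_eq_true_eq]
      by_cases h1 : ∀ t, S t = true → tv (imp A B) t S = true
      · by_cases h2 : ∀ t, S t = true → tv A t S = true
        · right; right; intro t ht
          have := h1 t ht
          rw [tv_imp] at this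
          simp only [Bool.or_eq_true, Bool.not_eq_true'] at this
          rcases this with hh | hh
          · rw [h2 t ht] at hh; exact absurd hh (by simp)
          · exact hh
        · right; left; simpa using h2
      · left
        simp only [not_forall] at h1
        obtain ⟨t, ht, hf⟩ := h1
        rw [Bool.not_eq_true, tv_imp] at hf
        simp only [Bool.or_eq_false_iff, Bool.not_eq_false'] at hf
        intro hall
        rcases hall t ht with hh | hh
        · rw [hf.1] at hh; exact absurd hh (by simp)
        · have := hf.2; rw [hh] at this; exact absurd this (by simp)
  | axT A =>
      intro s S hs
      simp only [tv_imp, tv_box, Bool.or_eq_true, Bool.not_eq_true', decide_eq_false_iff_not,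
        decide_eq_true_eq]
      by_cases h1 : ∀ t, S t = true → tv A t S = true
      · right; exact h1 s hs
      · left; exact h1
  | ax5 A =>
      intro s S _
      have hconst : ∀ t u, tv (dia A) t S = tv (dia A) u S := by
        intro t u; simp [tv_dia]
      simp only [tv_imp, tv_box, Bool.or_eq_true, Bool.not_eq_true']
      by_cases h1 : tv (dia A) s S = true
      · right
        simp only [decide_eq_true_eq]
        intro t _
        rw [hconst t s]; exact h1
      · left; simpa using h1
  | axm hmem =>
      intro s S _
      rcases hmem with ⟨x, rfl⟩
      simp only [tv, Bool.not_eq_true', Bool.and_eq_false_iff]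
      by_cases hx : x = 1
      · subst hx
        by_cases h0 : s = 0
        · subst h0; right; simp
        · left; simp [h0]
      · left; simp [hx]
  | mp h1 h2 ih1 ih2 =>
      intro s S hs
      have e1 := ih1 s S hs
      have e2 := ih2 s S hs
      rw [tv_imp] at e1
      simp only [Bool.or_eq_true, Bool.not_eq_true'] at e1
      rcases e1 with hh | hh
      · rw [e2] at hh; exact absurd hh (by simp)
      · exact hh
  | nec h ih =>
      intro s S _
      rw [tv_box]
      simp only [decide_eq_true_eq]
      intro t ht
      exact ih t S ht

end NF1

namespace NF1
open Fml

/-! ### The twelve normal-form constituents -/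

/-- The boxed atom corresponding to `◇χ_t`. -/
def bxf (t : Fin 3) : Fml := box (neg (chi t 1))

/-- The literal `◇χ_t` or `¬◇χ_t` according as `t ∈ S` or not. -/
def mdl (t : Fin 3) (S : Fin 3 → Bool) : Fml :=
  if S t then dia (chi t 1) else neg (dia (chi t 1))

/-- The modal profile formula of `S`. -/
def modProf (S : Fin 3 → Bool) : Fml := Fml.and (mdl 0 S) (Fml.and (mdl 1 S) (mdl 2 S))

/-- The constituent `δ_{s,S} = χ_s(x₁) ∧ μ_S`. -/
def delta (s : Fin 3) (S : Fin 3 → Bool) : Fml := Fml.and (chi s 1) (modProf S)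

def allS : List (Fin 3 → Bool) :=
  [![false,false,false], ![false,false,true], ![false,true,false], ![false,true,true],
   ![true,false,false], ![true,false,true], ![true,true,false], ![true,true,true]]

/-- The list of the twelve valid pairs `(s, S)` with `s ∈ S`. -/
def Dl : List (Fin 3 × (Fin 3 → Bool)) :=
  (List.finRange 3).flatMap fun s => (allS.filter fun S => S s).map fun S => (s, S)

lemma mem_allS (S : Fin 3 → Bool) : S ∈ allS := by
  have h : S = ![S 0, S 1, S 2] := by
    funext t; fin_cases t <;> rfl
  rw [h]
  cases hS0 : S 0 <;> cases hS1 : S 1 <;> cases hS2 : S 2 <;> simp [allS]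

lemma mem_Dl (p : Fin 3 × (Fin 3 → Bool)) : p ∈ Dl ↔ p.2 p.1 = true := by
  constructor
  · intro hp
    simp only [Dl, List.mem_flatMap, List.mem_map, List.mem_filter] at hp
    obtain ⟨s, _, S, ⟨_, hS⟩, rfl⟩ := hp
    exact hS
  · intro hp
    simp only [Dl, List.mem_flatMap, List.mem_map, List.mem_filter]
    exact ⟨p.1, List.mem_finRange _, p.2, ⟨mem_allS _, hp⟩, rfl⟩

/-- The normal form associated with a semantic value `g`. -/
def nfF (g : Fin 3 → (Fin 3 → Bool) → Bool) : Fml :=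
  bigOr ((Dl.filter fun p => g p.1 p.2).map fun p => delta p.1 p.2)

lemma nfF_congr {g g' : Fin 3 → (Fin 3 → Bool) → Bool}
    (h : ∀ s S, S s = true → g s S = g' s S) : nfF g = nfF g' := by
  unfold nfF
  refine congrArg _ (congrArg _ (List.filter_congr ?_))
  intro p hp
  rw [h p.1 p.2 ((mem_Dl p).1 hp)]

/-- The state at a valuation. -/
def s0 (a b : Bool) : Fin 3 := if a then 0 else if b then 1 else 2

/-- The profile at a valuation. -/
def S0 (c d e : Bool) : Fin 3 → Bool := ![!c, !d, !e]

/-- The four constraint formulas. -/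
def con1f : Fml := neg (Fml.and (Fml.tt 1) (Fml.ff 1))
def tdf (t : Fin 3) : Fml := imp (chi t 1) (dia (chi t 1))

lemma prv_con1f : Prv ConAx con1f := Prv.axm ⟨1, rfl⟩
lemma prv_tdf (t : Fin 3) : Prv ConAx (tdf t) := TDual _

/-- The constraints, at the level of a boolean valuation. -/
def Cons (v : Fml → Bool) : Prop :=
  evalProp v con1f = true ∧ evalProp v (tdf 0) = true ∧
    evalProp v (tdf 1) = true ∧ evalProp v (tdf 2) = true

def s0v (v : Fml → Bool) : Fin 3 := s0 (v (Fml.tt 1)) (v (Fml.ff 1))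
def S0v (v : Fml → Bool) : Fin 3 → Bool := S0 (v (bxf 0)) (v (bxf 1)) (v (bxf 2))

lemma chi0e : chi 0 1 = Fml.tt 1 := rfl
lemma chi1e : chi 1 1 = Fml.ff 1 := rfl
lemma chi2e : chi 2 1 = Nf 1 := rfl

lemma evalProp_chi (v : Fml → Bool) (hcon : evalProp v con1f = true) (s : Fin 3) :
    evalProp v (chi s 1) = decide (s = s0v v) := by
  simp only [con1f, evalProp] at hcon
  fin_cases s <;>
    cases ha : v (Fml.tt 1) <;> cases hb : v (Fml.ff 1) <;>
      simp_all [chi, Nf, evalProp, s0v, s0]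

lemma evalProp_mdl (v : Fml → Bool) (t : Fin 3) (S : Fin 3 → Bool) :
    evalProp v (mdl t S) = decide (S t = !(v (bxf t))) := by
  by_cases h : S t = true <;>
    simp [mdl, h, dia, evalProp, bxf]

lemma eq_S0v_iff (v : Fml → Bool) (S : Fin 3 → Bool) :
    S = S0v v ↔ (S 0 = !(v (bxf 0)) ∧ S 1 = !(v (bxf 1)) ∧ S 2 = !(v (bxf 2))) := by
  constructor
  · rintro rfl; exact ⟨rfl, rfl, rfl⟩
  · rintro ⟨h0, h1, h2⟩
    funext t; fin_cases t <;> simpa [S0v, S0]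
  
lemma evalProp_modProf (v : Fml → Bool) (S : Fin 3 → Bool) :
    evalProp v (modProf S) = decide (S = S0v v) := by
  simp only [modProf, evalProp, evalProp_mdl]
  rw [show (decide (S 0 = !v (bxf 0)) && (decide (S 1 = !v (bxf 1)) && decide (S 2 = !v (bxf 2))))
      = decide ((S 0 = !v (bxf 0)) ∧ (S 1 = !v (bxf 1)) ∧ (S 2 = !v (bxf 2))) by
    simp]
  rw [decide_eq_decide]
  exact (eq_S0v_iff v S).symm

lemma evalProp_delta (v : Fml → Bool) (hcon : evalProp v con1f = true)
    (s : Fin 3) (S : Fin 3 → Bool) :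
    evalProp v (delta s S) = decide (s = s0v v ∧ S = S0v v) := by
  show (evalProp v (chi s 1) && evalProp v (modProf S)) = _
  rw [evalProp_chi v hcon, evalProp_modProf]
  simp

lemma evalProp_bigOr (v : Fml → Bool) :
    ∀ l : List Fml, evalProp v (bigOr l) = l.any (fun φ => evalProp v φ)
  | [] => by simp [bigOr, evalProp, Fml.bot]
  | [φ] => by simp [bigOr]
  | φ :: ψ :: rest => by
      have h2 := evalProp_bigOr v (ψ :: rest)
      show evalProp v (Fml.or φ (bigOr (ψ :: rest))) = _
      simp only [Fml.or, evalProp, h2, List.any_cons]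
      cases evalProp v φ <;> cases evalProp v ψ <;>
        cases rest.any (fun φ => evalProp v φ) <;> rfl

/-- Validity of the current pair under the constraints. -/
lemma S0v_s0v (v : Fml → Bool) (hc : Cons v) : S0v v (s0v v) = true := by
  obtain ⟨hcon, h0, h1, h2⟩ := hc
  simp only [tdf, imp, dia, evalProp, chi0e, chi1e, chi2e, Nf] at h0 h1 h2
  simp only [s0v, S0v, s0, S0, bxf, chi0e, chi1e, chi2e, Nf]
  cases ha : v (Fml.tt 1) <;> cases hb : v (Fml.ff 1) <;> simp_all

lemma any_map' {α β : Type*} (f : α → β) (p : β → Bool) :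
    ∀ l : List α, (l.map f).any p = l.any (fun x => p (f x))
  | [] => rfl
  | a :: l => by simp [any_map' f p l]

/-- Central evaluation lemma: under the constraints, the normal form of `g`
evaluates to the value of `g` at the current pair. -/
lemma EV (g : Fin 3 → (Fin 3 → Bool) → Bool) (v : Fml → Bool) (hc : Cons v) :
    evalProp v (nfF g) = g (s0v v) (S0v v) := by
  rw [nfF, evalProp_bigOr, any_map']
  have hval : (s0v v, S0v v) ∈ Dl := (mem_Dl _).2 (S0v_s0v v hc)
  rcases hg : g (s0v v) (S0v v) with _ | _
  · rw [List.any_eq_false]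
    intro p hp
    simp only [List.mem_filter, mem_Dl] at hp
    rw [evalProp_delta v hc.1]
    rw [decide_eq_true_eq]
    intro hh
    obtain ⟨h1, h2⟩ := hh
    have := hp.2
    rw [h1, h2, hg] at this
    exact absurd this (by simp)
  · rw [List.any_eq_true]
    refine ⟨(s0v v, S0v v), ?_, ?_⟩
    · exact List.mem_filter.2 ⟨hval, hg⟩
    · rw [evalProp_delta v hc.1, decide_eq_true_eq]
      exact ⟨rfl, rfl⟩

end NF1

namespace NF1
open Fml

/-! ### Evaluation of the normal form in the intended semantics -/

lemma tv_chi : ∀ (t u : Fin 3) (S : Fin 3 → Bool), tv (chi t 1) u S = decide (u = t) := by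
  intro t u S
  fin_cases t <;> fin_cases u <;> simp [chi, Nf, tv]

lemma tv_con1f (s : Fin 3) (S : Fin 3 → Bool) : tv con1f s S = true := by
  simp only [con1f, tv]
  by_cases h : s = 0
  · subst h; simp
  · simp [h]

lemma Cons_tv (s : Fin 3) (S : Fin 3 → Bool) (hs : S s = true) :
    Cons (fun ψ => tv ψ s S) := by
  refine ⟨?_, ?_, ?_, ?_⟩ <;> rw [evalProp_tv]
  · exact tv_con1f s S
  · exact sound (prv_tdf 0) s S hs
  · exact sound (prv_tdf 1) s S hs
  · exact sound (prv_tdf 2) s S hs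

lemma s0v_tv (s : Fin 3) (S : Fin 3 → Bool) : s0v (fun ψ => tv ψ s S) = s := by
  simp only [s0v, tv]
  fin_cases s <;> simp [s0]

lemma bxf_tv (t s : Fin 3) (S : Fin 3 → Bool) :
    (fun ψ => tv ψ s S) (bxf t) = !(S t) := by
  show tv (box (neg (chi t 1))) s S = !(S t)
  rw [tv_box]
  cases hSt : S t
  · simp only [Bool.not_false, decide_eq_true_eq]
    intro u hu
    show (!(tv (chi t 1) u S)) = true
    rw [tv_chi]
    simp only [Bool.not_eq_true', decide_eq_false_iff_not]
    rintro rfl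
    rw [hSt] at hu; exact absurd hu (by simp)
  · simp only [Bool.not_true, decide_eq_false_iff_not]
    intro hall
    have := hall t hSt
    rw [show tv (neg (chi t 1)) t S = false by rw [show tv (neg (chi t 1)) t S = !(tv (chi t 1) t S) from rfl, tv_chi]; simp] at this
    exact absurd this (by simp)

lemma S0v_tv (s : Fin 3) (S : Fin 3 → Bool) : S0v (fun ψ => tv ψ s S) = S := by
  funext t
  have h0 := bxf_tv 0 s S
  have h1 := bxf_tv 1 s S
  have h2 := bxf_tv 2 s S
  fin_cases t <;> simp [S0v, S0, h0, h1, h2]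

/-- The normal form of `g` has value `g` at every valid pair. -/
lemma tv_nfF (g : Fin 3 → (Fin 3 → Bool) → Bool) (s : Fin 3) (S : Fin 3 → Bool)
    (hs : S s = true) : tv (nfF g) s S = g s S := by
  have h := EV g (fun ψ => tv ψ s S) (Cons_tv s S hs)
  rw [evalProp_tv, s0v_tv, S0v_tv] at h
  exact h

/-! ### The normal form is a 1-formula -/

lemma vars_chi (t : Fin 3) : vars (chi t 1) ⊆ {x | 1 ≤ x ∧ x ≤ 1} := by
  fin_cases t <;>
    · intro x hx
      simp [chi, Nf, vars] at hx
      simp_all [Set.mem_setOf_eq]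

lemma vars_delta (s : Fin 3) (S : Fin 3 → Bool) :
    vars (delta s S) ⊆ {x | 1 ≤ x ∧ x ≤ 1} := by
  have h1 := vars_chi s
  have h0 := vars_chi 0
  have h1' := vars_chi 1
  have h2 := vars_chi 2
  simp only [delta, modProf, mdl, vars]
  intro x hx
  rcases hx with hx | hx
  · exact h1 hx
  · rcases hx with hx | hx
    · by_cases h : S 0 = true <;> simp_all [dia, vars] <;> exact h0 hx
    · rcases hx with hx | hx
      · by_cases h : S 1 = true <;> simp_all [dia, vars] <;> exact h1' hx
      · by_cases h : S 2 = true <;> simp_all [dia, vars] <;> exact h2 hx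

lemma vars_bigOr_cons : ∀ (φ : Fml) (l : List Fml),
    vars (bigOr (φ :: l)) ⊆ vars φ ∪ ⋃ ψ ∈ l, vars ψ
  | φ, [] => by simp [bigOr]
  | φ, ψ :: rest => by
      have ih := vars_bigOr_cons ψ rest
      show vars (Fml.or φ (bigOr (ψ :: rest))) ⊆ _
      simp only [Fml.or, vars]
      intro x hx
      rcases hx with hx | hx
      · exact Set.mem_union_left _ hx
      · right
        have := ih hx
        simp only [Set.mem_union, Set.mem_iUnion] at this ⊢
        rcases this with h | ⟨i, hi, h⟩
        · exact ⟨ψ, by simp, h⟩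
        · exact ⟨i, by simp [hi], h⟩

lemma is1_nfF (g : Fin 3 → (Fin 3 → Bool) → Bool)
    (hne : (Dl.filter fun p => g p.1 p.2) ≠ []) : Is1Formula (nfF g) := by
  unfold nfF Is1Formula IsNFormula
  rcases hl : ((Dl.filter fun p => g p.1 p.2).map fun p => delta p.1 p.2) with _ | ⟨φ, l⟩
  · exact absurd (List.map_eq_nil_iff.1 hl) hne
  · intro x hx
    rw [hl] at hx
    have h := vars_bigOr_cons φ l hx
    have hmem : ∀ ψ ∈ φ :: l, vars ψ ⊆ {x | 1 ≤ x ∧ x ≤ 1} := by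
      intro ψ hψ
      rw [← hl] at hψ
      obtain ⟨p, _, rfl⟩ := List.mem_map.1 hψ
      exact vars_delta p.1 p.2
    simp only [Set.mem_union, Set.mem_iUnion] at h
    rcases h with h | ⟨i, hi, h⟩
    · exact hmem φ (by simp) h
    · exact hmem i (by simp [hi]) h

end NF1

namespace NF1
open Fml
variable {Ax : Set Fml}

/-! ### More tautological-consequence helpers -/

lemma tautL {Ax : Set Fml} (l : List Fml) (φ : Fml) (h : ∀ γ ∈ l, Prv Ax γ)
    (ht : ∀ v : Fml → Bool, (∀ γ ∈ l, evalProp v γ = true) → evalProp v φ = true) :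
    Prv Ax φ := tcons l φ h ht

lemma evalProp_imp (v : Fml → Bool) (A B : Fml) :
    evalProp v (imp A B) = (!(evalProp v A) || evalProp v B) := by
  show (!(evalProp v A && !(evalProp v B))) = _
  cases evalProp v A <;> cases evalProp v B <;> rfl

lemma evalProp_and (v : Fml → Bool) (A B : Fml) :
    evalProp v (Fml.and A B) = (evalProp v A && evalProp v B) := rfl

lemma evalProp_neg (v : Fml → Bool) (A : Fml) :
    evalProp v (neg A) = !(evalProp v A) := rfl

lemma evalProp_iff (v : Fml → Bool) (A B : Fml) :
    evalProp v (Fml.iff A B) = (evalProp v A == evalProp v B) := by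
  show ((!(evalProp v A && !(evalProp v B))) && !(evalProp v B && !(evalProp v A))) = _
  cases evalProp v A <;> cases evalProp v B <;> rfl

lemma evalProp_dia (v : Fml → Bool) (A : Fml) :
    evalProp v (dia A) = !(v (box (neg A))) := rfl

/-! ### The world theory `W` -/

def Wf : Fml := Fml.and con1f (Fml.and (tdf 0) (Fml.and (tdf 1) (tdf 2)))

lemma evalProp_Wf_iff (v : Fml → Bool) : evalProp v Wf = true ↔ Cons v := by
  simp only [Wf, evalProp_and, Bool.and_eq_true, Cons]

lemma prv_Wf : Prv ConAx Wf := by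
  refine taut4 _ _ _ _ _ prv_con1f (prv_tdf 0) (prv_tdf 1) (prv_tdf 2) ?_
  intro v h1 h2 h3 h4
  simp [Wf, evalProp_and, h1, h2, h3, h4]

/-! ### Stability of the modal profile -/

lemma stab_mdl (t : Fin 3) (S : Fin 3 → Bool) :
    Prv Ax (imp (mdl t S) (box (mdl t S))) := by
  by_cases h : S t = true
  · rw [mdl, if_pos h]; exact Prv.ax5 _
  · rw [mdl, if_neg h]; exact stabNegDia _

lemma stabProf (S : Fin 3 → Bool) : Prv Ax (imp (modProf S) (box (modProf S))) := by
  refine tautL [imp (mdl 0 S) (box (mdl 0 S)), imp (mdl 1 S) (box (mdl 1 S)),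
    imp (mdl 2 S) (box (mdl 2 S)),
    imp (Fml.and (box (mdl 1 S)) (box (mdl 2 S))) (box (Fml.and (mdl 1 S) (mdl 2 S))),
    imp (Fml.and (box (mdl 0 S)) (box (Fml.and (mdl 1 S) (mdl 2 S))))
      (box (Fml.and (mdl 0 S) (Fml.and (mdl 1 S) (mdl 2 S))))] _ ?_ ?_
  · intro γ hγ
    simp only [List.mem_cons, List.not_mem_nil, or_false] at hγ
    rcases hγ with rfl | rfl | rfl | rfl | rfl
    · exact stab_mdl 0 S
    · exact stab_mdl 1 S
    · exact stab_mdl 2 S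
    · exact boxAnd2 _ _
    · exact boxAnd2 _ _
  · intro v hv
    have h0 := hv (imp (mdl 0 S) (box (mdl 0 S))) (by simp)
    have h1 := hv (imp (mdl 1 S) (box (mdl 1 S))) (by simp)
    have h2 := hv (imp (mdl 2 S) (box (mdl 2 S))) (by simp)
    have h3 := hv (imp (Fml.and (box (mdl 1 S)) (box (mdl 2 S))) (box (Fml.and (mdl 1 S) (mdl 2 S)))) (by simp)
    have h4 := hv (imp (Fml.and (box (mdl 0 S)) (box (Fml.and (mdl 1 S) (mdl 2 S)))) (box (Fml.and (mdl 0 S) (Fml.and (mdl 1 S) (mdl 2 S))))) (by simp)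
    revert h0 h1 h2 h3 h4
    simp only [modProf, evalProp_imp, evalProp_and, Bool.or_eq_true, Bool.not_eq_true',
      Bool.and_eq_true, Bool.and_eq_false_iff]
    intro h0 h1 h2 h3 h4
    by_cases e0 : evalProp v (mdl 0 S) = true <;>
      by_cases e1 : evalProp v (mdl 1 S) = true <;>
        by_cases e2 : evalProp v (mdl 2 S) = true <;>
          simp_all
end NF1

namespace NF1
open Fml

/-- Each profile literal follows from the profile. -/
lemma modProf_comp {Ax : Set Fml} (t : Fin 3) (S : Fin 3 → Bool) :
    Prv Ax (imp (modProf S) (mdl t S)) := by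
  refine taut0 _ ?_
  intro v
  simp only [modProf, evalProp_imp, evalProp_and, Bool.or_eq_true, Bool.not_eq_true',
    Bool.and_eq_false_iff, Bool.and_eq_true]
  fin_cases t <;>
    · by_cases e0 : evalProp v (mdl 0 S) = true <;>
        by_cases e1 : evalProp v (mdl 1 S) = true <;>
          by_cases e2 : evalProp v (mdl 2 S) = true <;>
            simp_all

/-- If the value `g` is closed at profile `S`, then `δ_{s,S}` forces `□(nf g)`. -/
lemma lemA (g : Fin 3 → (Fin 3 → Bool) → Bool) (s : Fin 3) (S : Fin 3 → Bool)
    (hcl : ∀ t, S t = true → g t S = true) :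
    Prv ConAx (imp (delta s S) (box (nfF g))) := by
  have core : Prv ConAx (imp (Fml.and Wf (modProf S)) (nfF g)) := by
    refine taut0 _ ?_
    intro v
    rw [evalProp_imp, evalProp_and]
    by_cases hW : evalProp v Wf = true
    · by_cases hM : evalProp v (modProf S) = true
      · have hc : Cons v := (evalProp_Wf_iff v).1 hW
        rw [evalProp_modProf] at hM
        have hSS : S = S0v v := by simpa using hM
        have hval : S0v v (s0v v) = true := S0v_s0v v hc
        have hg : evalProp v (nfF g) = true := by
          rw [EV g v hc, ← hSS]
          exact hcl (s0v v) (by rw [hSS]; exact hval)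
        simp [hg]
      · simp only [Bool.not_eq_true] at hM; simp [hM]
    · simp only [Bool.not_eq_true] at hW; simp [hW]
  have bW : Prv ConAx (box Wf) := prv_Wf.nec
  have sP : Prv ConAx (imp (modProf S) (box (modProf S))) := stabProf S
  have bA : Prv ConAx (imp (Fml.and (box Wf) (box (modProf S))) (box (Fml.and Wf (modProf S)))) :=
    boxAnd2 _ _
  have bm : Prv ConAx (imp (box (Fml.and Wf (modProf S))) (box (nfF g))) := boxMono core
  refine taut4 _ _ _ _ _ bW sP bA bm ?_
  intro v h1 h2 h3 h4
  revert h1 h2 h3 h4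
  simp only [delta, evalProp_imp, evalProp_and, Bool.or_eq_true, Bool.not_eq_true',
    Bool.and_eq_true, Bool.and_eq_false_iff]
  intro h1 h2 h3 h4
  by_cases eM : evalProp v (modProf S) = true <;>
    by_cases eX : evalProp v (chi s 1) = true <;>
      simp_all

/-- If the value `g` fails somewhere on profile `S`, then `δ_{s,S}` forces `¬□(nf g)`. -/
lemma lemB (g : Fin 3 → (Fin 3 → Bool) → Bool) (s t0 : Fin 3) (S : Fin 3 → Bool)
    (ht0 : S t0 = true) (hgf : g t0 S = false) :
    Prv ConAx (imp (delta s S) (neg (box (nfF g)))) := by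
  have hmdl : mdl t0 S = dia (chi t0 1) := if_pos ht0
  have core2 : Prv ConAx (imp (Fml.and (chi t0 1) (Fml.and (modProf S) Wf)) (neg (nfF g))) := by
    refine taut0 _ ?_
    intro v
    rw [evalProp_imp, evalProp_and, evalProp_and, evalProp_neg]
    by_cases hW : evalProp v Wf = true
    · by_cases hM : evalProp v (modProf S) = true
      · have hc : Cons v := (evalProp_Wf_iff v).1 hW
        by_cases hX : evalProp v (chi t0 1) = true
        · rw [evalProp_chi v hc.1] at hX
          have hs0 : t0 = s0v v := by simpa using hX
          rw [evalProp_modProf] at hM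
          have hSS : S = S0v v := by simpa using hM
          have hg : evalProp v (nfF g) = false := by
            rw [EV g v hc, ← hs0, ← hSS]; exact hgf
          simp [hg]
        · simp only [Bool.not_eq_true] at hX; simp [hX]
      · simp only [Bool.not_eq_true] at hM; simp [hM]
    · simp only [Bool.not_eq_true] at hW; simp [hW]
  have dm : Prv ConAx (imp (dia (Fml.and (chi t0 1) (Fml.and (modProf S) Wf)))
      (dia (neg (nfF g)))) := diaMono core2
  have dntb : Prv ConAx (imp (dia (neg (nfF g))) (neg (box (nfF g)))) :=
    diaNegToNegBox _
  have dba : Prv ConAx (imp (Fml.and (dia (chi t0 1)) (box (Fml.and (modProf S) Wf)))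
      (dia (Fml.and (chi t0 1) (Fml.and (modProf S) Wf)))) := diaBoxAnd _ _
  have bA : Prv ConAx (imp (Fml.and (box (modProf S)) (box Wf)) (box (Fml.and (modProf S) Wf))) :=
    boxAnd2 _ _
  have sP : Prv ConAx (imp (modProf S) (box (modProf S))) := stabProf S
  have bW : Prv ConAx (box Wf) := prv_Wf.nec
  have hcomp : Prv ConAx (imp (modProf S) (dia (chi t0 1))) := by
    rw [← hmdl]; exact modProf_comp t0 S
  refine tautL [box Wf, imp (modProf S) (box (modProf S)),
    imp (Fml.and (box (modProf S)) (box Wf)) (box (Fml.and (modProf S) Wf)),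
    imp (Fml.and (dia (chi t0 1)) (box (Fml.and (modProf S) Wf)))
      (dia (Fml.and (chi t0 1) (Fml.and (modProf S) Wf))),
    imp (dia (Fml.and (chi t0 1) (Fml.and (modProf S) Wf))) (dia (neg (nfF g))),
    imp (dia (neg (nfF g))) (neg (box (nfF g))),
    imp (modProf S) (dia (chi t0 1))] _ ?_ ?_
  · intro γ hγ
    simp only [List.mem_cons, List.not_mem_nil, or_false] at hγ
    rcases hγ with rfl | rfl | rfl | rfl | rfl | rfl | rfl
    · exact bW
    · exact sP
    · exact bA
    · exact dba
    · exact dm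
    · exact dntb
    · exact hcomp
  · intro v hv
    have h1 := hv (box Wf) (by simp)
    have h2 := hv (imp (modProf S) (box (modProf S))) (by simp)
    have h3 := hv (imp (Fml.and (box (modProf S)) (box Wf)) (box (Fml.and (modProf S) Wf))) (by simp)
    have h4 := hv (imp (Fml.and (dia (chi t0 1)) (box (Fml.and (modProf S) Wf)))
      (dia (Fml.and (chi t0 1) (Fml.and (modProf S) Wf)))) (by simp)
    have h5 := hv (imp (dia (Fml.and (chi t0 1) (Fml.and (modProf S) Wf))) (dia (neg (nfF g)))) (by simp)
    have h6 := hv (imp (dia (neg (nfF g))) (neg (box (nfF g)))) (by simp)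
    have h7 := hv (imp (modProf S) (dia (chi t0 1))) (by simp)
    revert h1 h2 h3 h4 h5 h6 h7
    simp only [delta, evalProp_imp, evalProp_and, evalProp_neg, Bool.or_eq_true,
      Bool.not_eq_true', Bool.and_eq_true, Bool.and_eq_false_iff]
    intro h1 h2 h3 h4 h5 h6 h7
    by_cases eM : evalProp v (modProf S) = true <;>
      by_cases eX : evalProp v (chi s 1) = true <;>
        simp_all

end NF1

namespace NF1
open Fml

/-- The semantic value of a formula. -/
def tvg (φ : Fml) : Fin 3 → (Fin 3 → Bool) → Bool := fun s S => tv φ s S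

/-- Modal step: the box of a normal form is equivalent to a normal form. -/
lemma prv_box_nfF (g : Fin 3 → (Fin 3 → Bool) → Bool) :
    Prv ConAx (Fml.iff (box (nfF g))
      (nfF (fun _ S => decide (∀ t, S t = true → g t S = true)))) := by
  refine tautL ([con1f, tdf 0, tdf 1, tdf 2] ++ Dl.map (fun p =>
      if ∀ t, p.2 t = true → g t p.2 = true then imp (delta p.1 p.2) (box (nfF g))
      else imp (delta p.1 p.2) (neg (box (nfF g))))) _ ?_ ?_
  · intro γ hγ
    rcases List.mem_append.1 hγ with hb | hm
    · simp only [List.mem_cons, List.not_mem_nil, or_false] at hb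
      rcases hb with rfl | rfl | rfl | rfl
      · exact prv_con1f
      · exact prv_tdf 0
      · exact prv_tdf 1
      · exact prv_tdf 2
    · obtain ⟨p, hp, rfl⟩ := List.mem_map.1 hm
      by_cases hcl : ∀ t, p.2 t = true → g t p.2 = true
      · rw [if_pos hcl]; exact lemA g p.1 p.2 hcl
      · rw [if_neg hcl]
        push_neg at hcl
        obtain ⟨t0, ht0, hgf⟩ := hcl
        exact lemB g p.1 t0 p.2 ht0 (by simpa using hgf)
  · intro v hv
    have hc : Cons v := ⟨hv con1f (by simp), hv (tdf 0) (by simp),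
      hv (tdf 1) (by simp), hv (tdf 2) (by simp)⟩
    have hval : S0v v (s0v v) = true := S0v_s0v v hc
    have hmem : (s0v v, S0v v) ∈ Dl := (mem_Dl _).2 hval
    have hf := hv _ (List.mem_append.2 (Or.inr (List.mem_map.2 ⟨(s0v v, S0v v), hmem, rfl⟩)))
    have hδ : evalProp v (delta (s0v v) (S0v v)) = true := by
      rw [evalProp_delta v hc.1, decide_eq_true_eq]; exact ⟨rfl, rfl⟩
    rw [evalProp_iff, EV _ v hc]
    by_cases hcl : ∀ t, S0v v t = true → g t (S0v v) = true
    · rw [if_pos hcl] at hf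
      rw [evalProp_imp, hδ] at hf
      simp only [Bool.not_true, Bool.false_or] at hf
      rw [hf, decide_eq_true hcl]
      rfl
    · rw [if_neg hcl] at hf
      rw [evalProp_imp, hδ, evalProp_neg] at hf
      simp only [Bool.not_true, Bool.false_or, Bool.not_eq_true'] at hf
      rw [hf, decide_eq_false hcl]
      rfl

lemma evalProp_tt (v : Fml → Bool) (x : ℕ) : evalProp v (Fml.tt x) = v (Fml.tt x) := rfl
lemma evalProp_ff (v : Fml → Bool) (x : ℕ) : evalProp v (Fml.ff x) = v (Fml.ff x) := rfl

lemma is1_of_neg {φ : Fml} (h : Is1Formula (neg φ)) : Is1Formula φ := h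

lemma is1_of_and {φ ψ : Fml} (h : Is1Formula (Fml.and φ ψ)) :
    Is1Formula φ ∧ Is1Formula ψ := by
  constructor
  · intro x hx; exact h (Set.mem_union_left _ hx)
  · intro x hx; exact h (Set.mem_union_right _ hx)

/-- Normal form theorem: every 1-formula is `S5[Con]`-equivalent to the
normal form of its semantic value. -/
theorem NF : ∀ (φ : Fml), Is1Formula φ → Prv ConAx (Fml.iff φ (nfF (tvg φ))) := by
  intro φ
  induction φ with
  | tt x =>
      intro h1
      have hx : x = 1 := by
        have h2 : 1 ≤ x ∧ x ≤ 1 := h1 (show x ∈ vars (Fml.tt x) from rfl)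
        omega
      subst hx
      refine taut4 _ _ _ _ _ prv_con1f (prv_tdf 0) (prv_tdf 1) (prv_tdf 2) ?_
      intro v h1 h2 h3 h4
      have hc : Cons v := ⟨h1, h2, h3, h4⟩
      rw [evalProp_iff, EV _ v hc]
      show (v (Fml.tt 1) == tvg (Fml.tt 1) (s0v v) (S0v v)) = true
      simp only [tvg, tv, s0v, s0]
      by_cases ha : v (Fml.tt 1) = true <;> by_cases hb : v (Fml.ff 1) = true <;>
        simp_all
  | ff x =>
      intro h1
      have hx : x = 1 := by
        have h2 : 1 ≤ x ∧ x ≤ 1 := h1 (show x ∈ vars (Fml.ff x) from rfl)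
        omega
      subst hx
      refine taut4 _ _ _ _ _ prv_con1f (prv_tdf 0) (prv_tdf 1) (prv_tdf 2) ?_
      intro v h1 h2 h3 h4
      have hc : Cons v := ⟨h1, h2, h3, h4⟩
      rw [evalProp_iff, EV _ v hc]
      show (v (Fml.ff 1) == tvg (Fml.ff 1) (s0v v) (S0v v)) = true
      simp only [tvg, tv, s0v, s0]
      simp only [con1f, evalProp_neg, evalProp_and, evalProp_tt, evalProp_ff] at h1
      by_cases ha : v (Fml.tt 1) = true <;> by_cases hb : v (Fml.ff 1) = true <;>
        simp_all
  | neg φ ih =>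
      intro h1
      have hφ := ih (is1_of_neg h1)
      refine tautL [Fml.iff φ (nfF (tvg φ)), con1f, tdf 0, tdf 1, tdf 2] _ ?_ ?_
      · intro γ hγ
        simp only [List.mem_cons, List.not_mem_nil, or_false] at hγ
        rcases hγ with rfl | rfl | rfl | rfl | rfl
        · exact hφ
        · exact prv_con1f
        · exact prv_tdf 0
        · exact prv_tdf 1
        · exact prv_tdf 2
      · intro v hv
        have hIH := hv (Fml.iff φ (nfF (tvg φ))) (by simp)
        have hc : Cons v := ⟨hv con1f (by simp), hv (tdf 0) (by simp),
          hv (tdf 1) (by simp), hv (tdf 2) (by simp)⟩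
        rw [evalProp_iff, EV _ v hc] at hIH ⊢
        rw [evalProp_neg]
        have : tvg (neg φ) (s0v v) (S0v v) = !(tvg φ (s0v v) (S0v v)) := rfl
        rw [this]
        simp only [beq_iff_eq] at hIH
        rw [hIH]
        simp
  | and φ ψ ihφ ihψ =>
      intro h1
      obtain ⟨hl, hr⟩ := is1_of_and h1
      have hφ := ihφ hl
      have hψ := ihψ hr
      refine tautL [Fml.iff φ (nfF (tvg φ)), Fml.iff ψ (nfF (tvg ψ)),
        con1f, tdf 0, tdf 1, tdf 2] _ ?_ ?_
      · intro γ hγ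
        simp only [List.mem_cons, List.not_mem_nil, or_false] at hγ
        rcases hγ with rfl | rfl | rfl | rfl | rfl | rfl
        · exact hφ
        · exact hψ
        · exact prv_con1f
        · exact prv_tdf 0
        · exact prv_tdf 1
        · exact prv_tdf 2
      · intro v hv
        have hIH1 := hv (Fml.iff φ (nfF (tvg φ))) (by simp)
        have hIH2 := hv (Fml.iff ψ (nfF (tvg ψ))) (by simp)
        have hc : Cons v := ⟨hv con1f (by simp), hv (tdf 0) (by simp),
          hv (tdf 1) (by simp), hv (tdf 2) (by simp)⟩
        rw [evalProp_iff, EV _ v hc] at hIH1 hIH2 ⊢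
        rw [evalProp_and]
        have : tvg (Fml.and φ ψ) (s0v v) (S0v v)
            = (tvg φ (s0v v) (S0v v) && tvg ψ (s0v v) (S0v v)) := rfl
        rw [this]
        simp only [beq_iff_eq] at hIH1 hIH2
        rw [hIH1, hIH2]
        simp
  | box φ ih =>
      intro h1
      have hφ := ih h1
      have hbc : Prv ConAx (Fml.iff (box φ) (box (nfF (tvg φ)))) := boxCongr hφ
      have hbox := prv_box_nfF (tvg φ)
      have hEq : nfF (fun _ S => decide (∀ t, S t = true → tvg φ t S = true))
          = nfF (tvg (box φ)) := rfl
      rw [hEq] at hbox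
      refine taut2 _ _ _ hbc hbox ?_
      intro v h1 h2
      rw [evalProp_iff] at h1 h2 ⊢
      simp only [beq_iff_eq] at h1 h2 ⊢
      rw [h1, h2]

end NF1

namespace NF1
open Fml

/-- The type of valid pairs. -/
abbrev Dv : Type := {p : Fin 3 × (Fin 3 → Bool) // p.2 p.1 = true}

/-- The semantic value map. -/
def semv (φ : {f : Fml // Is1Formula f}) : Dv → Bool := fun d => tv φ.1 d.1.1 d.1.2

lemma semv_compat (φ ψ : {f : Fml // Is1Formula f})
    (h : Prv ConAx (Fml.iff φ.1 ψ.1)) : semv φ = semv ψ := by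
  funext d
  have hs := sound h d.1.1 d.1.2 d.2
  simp only [Fml.iff, Fml.imp, tv] at hs
  show tv φ.1 d.1.1 d.1.2 = tv ψ.1 d.1.1 d.1.2
  cases h1 : tv φ.1 d.1.1 d.1.2 <;> cases h2 : tv ψ.1 d.1.1 d.1.2 <;> simp_all

lemma card_quot : Nat.card (Quot (fun φ ψ : {f : Fml // Is1Formula f} =>
    Prv ConAx (Fml.iff φ.1 ψ.1))) = 4096 := by
  set R := fun φ ψ : {f : Fml // Is1Formula f} => Prv ConAx (Fml.iff φ.1 ψ.1) with hR
  have hlift : ∀ φ ψ, R φ ψ → semv φ = semv ψ := semv_compat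
  set F : Quot R → (Dv → Bool) := Quot.lift semv hlift with hF
  have hinj : Function.Injective F := by
    intro q q'
    refine Quot.induction_on q (fun φ => ?_) 
    refine Quot.induction_on q' (fun ψ h => ?_)
    have hsem : semv φ = semv ψ := h
    apply Quot.sound
    have h1 := NF φ.1 φ.2
    have h2 := NF ψ.1 ψ.2
    have hEq : nfF (tvg φ.1) = nfF (tvg ψ.1) := by
      apply nfF_congr
      intro s S hs
      have := congrFun hsem ⟨(s, S), hs⟩
      exact this
    rw [hEq] at h1
    show Prv ConAx (Fml.iff φ.1 ψ.1)
    refine taut2 _ _ _ h1 h2 ?_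
    intro v hv1 hv2
    rw [evalProp_iff] at hv1 hv2 ⊢
    simp only [beq_iff_eq] at hv1 hv2 ⊢
    rw [hv1, hv2]
  have hsurj : Function.Surjective F := by
    intro h
    by_cases hall : ∀ d : Dv, h d = false
    · refine ⟨Quot.mk R ⟨Fml.and (Fml.tt 1) (neg (Fml.tt 1)), ?_⟩, ?_⟩
      · intro x hx
        rcases hx with hx | hx
        · have : x = 1 := hx
          subst this; exact ⟨le_refl 1, le_refl 1⟩
        · have : x = 1 := hx
          subst this; exact ⟨le_refl 1, le_refl 1⟩
      · funext d
        rw [hall d]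
        show (tv (Fml.tt 1) d.1.1 d.1.2 && !(tv (Fml.tt 1) d.1.1 d.1.2)) = false
        cases tv (Fml.tt 1) d.1.1 d.1.2 <;> rfl
    · push_neg at hall
      obtain ⟨d0, hd0⟩ := hall
      have hd0' : h d0 = true := by revert hd0; cases h d0 <;> simp
      clear hd0
      set g : Fin 3 → (Fin 3 → Bool) → Bool :=
        fun s S => if hv : S s = true then h ⟨(s, S), hv⟩ else false with hg
      have hgd : ∀ d : Dv, g d.1.1 d.1.2 = h d := by
        rintro ⟨⟨s, S⟩, hv⟩
        simp only [hg]
        rw [dif_pos hv]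
      have hne : (Dl.filter fun p => g p.1 p.2) ≠ [] := by
        apply List.ne_nil_of_mem (a := d0.1)
        refine List.mem_filter.2 ⟨(mem_Dl _).2 d0.2, ?_⟩
        have : g d0.1.1 d0.1.2 = true := by rw [hgd d0, hd0']
        simpa using this
      refine ⟨Quot.mk R ⟨nfF g, is1_nfF g hne⟩, ?_⟩
      funext d
      show tv (nfF g) d.1.1 d.1.2 = h d
      rw [tv_nfF g d.1.1 d.1.2 d.2, hgd d]
  have hbij : Function.Bijective F := ⟨hinj, hsurj⟩
  rw [Nat.card_eq_of_bijective F hbij]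
  rw [Nat.card_eq_fintype_card, Fintype.card_fun]
  have hDv : Fintype.card Dv = 12 := by decide
  rw [hDv]
  norm_num

end NF1

/-- up to S5[Con]-provable equivalence there are exactly `4096`
one-variable formulas. -/
theorem count_one_formulas_S5Con :
    Nat.card (Quot (fun φ ψ : {f : Fml // Is1Formula f} =>
      Prv ConAx (Fml.iff φ.1 ψ.1))) = 4096 := by
  exact NF1.card_quot

end KripkeModal
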